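/- Let d ∈ ℕ and let ρ be the pseudohyperbolic metric on 𝔹_d. For all z, w ∈ 𝔹_d, the infimum of ℓ_ρ(γ) over all continuous curves γ : [a,b] → 𝔹_d with γ(a) = z and γ(b) = w equals the Poincaré–Bergman distance β(z,w) = artanh(ρ(z,w)) = (1/2)·log((1+ρ(z,w))/(1−ρ(z,w))). -/

import Mathlib

open Complex Metric

/-- The pseudohyperbolic metric on the unit ball of `ℂ^d`:
`ρ(z,w) = (1 − (1−‖z‖²)(1−‖w‖²)/|1−⟨z,w⟩|²)^{1/2}`, where `⟨z,w⟩ = Σⱼ zⱼ·conj(wⱼ)`. -/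
noncomputable def pseudoHyp {d : ℕ} (z w : EuclideanSpace ℂ (Fin d)) : ℝ :=
  Real.sqrt (1 - (1 - ‖z‖ ^ 2) * (1 - ‖w‖ ^ 2) / (‖(1 - (inner ℂ w z : ℂ))‖) ^ 2)

/-- The length of a curve `γ : [a,b] → X` with respect to a pseudometric `d`:
the supremum over all partitions `a = t₀ < t₁ < … < tₙ = b` of
`Σ_{i=0}^{n−1} d(γ(tᵢ), γ(tᵢ₊₁))`. -/
noncomputable def curveLen {X : Type*} (d : X → X → ℝ) (a b : ℝ) (γ : ℝ → X) : ENNReal :=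
  sSup {L : ENNReal | ∃ (n : ℕ) (t : ℕ → ℝ), t 0 = a ∧ t n = b ∧
    (∀ i, i < n → t i < t (i + 1)) ∧
    L = ∑ i ∈ Finset.range n, ENNReal.ofReal (d (γ (t i)) (γ (t (i + 1))))}

noncomputable def atanh (x : ℝ) : ℝ := (1/2) * Real.log ((1+x)/(1-x))

lemma atanh_zero : atanh 0 = 0 := by simp [atanh]

lemma ratio_pos {x : ℝ} (h0 : -1 < x) (h1 : x < 1) : 0 < (1+x)/(1-x) :=
  div_pos (by linarith) (by linarith)

lemma atanh_nonneg {x : ℝ} (h0 : 0 ≤ x) (h1 : x < 1) : 0 ≤ atanh x := by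
  have : (1:ℝ) ≤ (1+x)/(1-x) := (one_le_div (by linarith)).2 (by linarith)
  have := Real.log_nonneg this
  unfold atanh; nlinarith

lemma atanh_mono {a b : ℝ} (h0 : -1 < a) (hab : a ≤ b) (hb : b < 1) : atanh a ≤ atanh b := by
  have h1 : (1+a)/(1-a) ≤ (1+b)/(1-b) := by
    rw [div_le_div_iff₀ (by linarith) (by linarith)]; nlinarith
  have := Real.log_le_log (ratio_pos h0 (by linarith)) h1
  unfold atanh; nlinarith

lemma atanh_add {a b : ℝ} (h0 : 0 ≤ a) (h1 : a < 1) (h2 : 0 ≤ b) (h3 : b < 1) :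
    atanh a + atanh b = atanh ((a+b)/(1+a*b)) := by
  have hab : 0 < 1 + a*b := by nlinarith
  unfold atanh
  have e1 : 1 + (a+b)/(1+a*b) = (1+a)*(1+b)/(1+a*b) := by field_simp; ring
  have e2 : 1 - (a+b)/(1+a*b) = (1-a)*(1-b)/(1+a*b) := by field_simp; ring
  have e3 : (1+a)*(1+b)/(1+a*b)/((1-a)*(1-b)/(1+a*b)) = ((1+a)*(1+b))/((1-a)*(1-b)) := by
    rw [div_div_div_cancel_right₀]
    exact ne_of_gt hab
  have A1 : Real.log ((1+a)/(1-a)) = Real.log (1+a) - Real.log (1-a) :=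
    Real.log_div (by linarith) (by linarith)
  have A2 : Real.log ((1+b)/(1-b)) = Real.log (1+b) - Real.log (1-b) :=
    Real.log_div (by linarith) (by linarith)
  have A3 : Real.log ((1+a)*(1+b)/((1-a)*(1-b)))
      = Real.log (1+a) + Real.log (1+b) - (Real.log (1-a) + Real.log (1-b)) := by
    rw [Real.log_div (by nlinarith) (by nlinarith),
      Real.log_mul (by nlinarith) (by nlinarith),
      Real.log_mul (by nlinarith) (by nlinarith)]
  rw [e1, e2, e3, A1, A2, A3]
  ring

lemma atanh_le {x : ℝ} (h0 : 0 ≤ x) (h1 : x < 1) : atanh x ≤ x/(1-x) := by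
  have hx1 : (0:ℝ) < 1 - x := by linarith
  have l1 : Real.log (1+x) ≤ x := by
    have := Real.log_le_sub_one_of_pos (show (0:ℝ) < 1+x by linarith); linarith
  have l2 : -Real.log (1-x) ≤ x/(1-x) := by
    have := Real.log_le_sub_one_of_pos (show (0:ℝ) < (1-x)⁻¹ by positivity)
    rw [Real.log_inv] at this
    have : -Real.log (1-x) ≤ (1-x)⁻¹ - 1 := this
    have e : (1-x)⁻¹ - 1 = x/(1-x) := by field_simp; ring
    linarith [this, e.le]
  have : atanh x = (1/2) * (Real.log (1+x) - Real.log (1-x)) := by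
    unfold atanh; rw [Real.log_div (by linarith) (by linarith)]
  rw [this]
  have hxx : x ≤ x/(1-x) := by rw [le_div_iff₀ hx1]; nlinarith
  linarith

lemma le_atanh {x : ℝ} (h0 : 0 ≤ x) (h1 : x < 1) : x ≤ atanh x := by
  set f : ℝ → ℝ := fun t => Real.log (1+t) - Real.log (1-t) - 2*t with hf
  have key : ∀ y ∈ Set.Ico (0:ℝ) 1, 0 ≤ f y := by
    intro y hy
    have hmono : MonotoneOn f (Set.Ico (0:ℝ) 1) := by
      have hd : ∀ t ∈ Set.Ico (0:ℝ) 1, HasDerivAt f (1/(1+t) + 1/(1-t) - 2) t := by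
        intro t ht
        have h1t : (1:ℝ) + t ≠ 0 := by cases ht; intro h; linarith
        have h2t : (1:ℝ) - t ≠ 0 := by cases ht with | intro l r => intro h; linarith
        have d1 : HasDerivAt (fun t : ℝ => Real.log (1+t)) (1/(1+t)) t := by
          simpa using (((hasDerivAt_id t).const_add 1).log h1t)
        have d2 : HasDerivAt (fun t : ℝ => Real.log (1-t)) (-1/(1-t)) t := by
          simpa using (((hasDerivAt_id t).const_sub 1).log h2t)
        have d3 : HasDerivAt (fun t : ℝ => 2*t) 2 t := by
          simpa using (hasDerivAt_id t).const_mul 2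
        have := (d1.sub d2).sub d3
        exact this.congr_deriv (by ring)
      apply monotoneOn_of_deriv_nonneg (convex_Ico 0 1)
      · exact fun t ht => (hd t ht).continuousAt.continuousWithinAt
      · intro t ht
        rw [interior_Ico] at ht
        exact ((hd t ⟨ht.1.le, ht.2⟩).differentiableAt.differentiableWithinAt)
      · intro t ht
        rw [interior_Ico] at ht
        have := (hd t (Set.mem_Ico.2 ⟨ht.1.le, ht.2⟩)).deriv
        rw [this]
        have ha : (0:ℝ) < 1 + t := by cases ht; linarith
        have hb : (0:ℝ) < 1 - t := by cases ht with | intro l r => linarith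
        rw [div_add_div _ _ (ne_of_gt ha) (ne_of_gt hb), sub_nonneg, le_div_iff₀ (by positivity)]
        cases ht with | intro l r => nlinarith
    have h0f : f 0 = 0 := by simp [hf]
    have := hmono (Set.mem_Ico.2 ⟨le_refl 0, one_pos⟩) hy hy.1
    rw [h0f] at this; exact this
  have := key x ⟨h0, h1⟩
  have e : atanh x = (1/2) * (Real.log (1+x) - Real.log (1-x)) := by
    unfold atanh; rw [Real.log_div (by linarith) (by linarith)]
  rw [e]; simp only [hf] at this; nlinarith

lemma atanh_sub {a b : ℝ} (h0 : 0 ≤ a) (hab : a ≤ b) (hb : b < 1) :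
    atanh b - atanh a = atanh ((b-a)/(1-a*b)) := by
  have hc0 : 0 ≤ (b-a)/(1-a*b) := by
    apply div_nonneg (by linarith); nlinarith
  have h1ab : (0:ℝ) < 1 - a*b := by nlinarith
  have hc1 : (b-a)/(1-a*b) < 1 := by rw [div_lt_one h1ab]; nlinarith
  rw [eq_comm, eq_sub_iff_add_eq, atanh_add hc0 hc1 h0 (lt_of_le_of_lt hab hb)]
  congr 1
  have hden : (0:ℝ) < 1 + (b-a)/(1-a*b) * a := by positivity
  have ha1 : a < 1 := lt_of_le_of_lt hab hb
  rw [div_eq_iff (ne_of_gt hden)]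
  have h1ba : 1 - b*a ≠ 0 := ne_of_gt (by rw [mul_comm]; exact h1ab)
  field_simp
  ring




variable {d : ℕ}

local notation "E" => EuclideanSpace ℂ (Fin d)

open scoped Classical in
noncomputable def mob (a z : E) : E :=
  if a = 0 then -z else
    ((1 - (inner ℂ a z : ℂ))⁻¹) •
      ((1 - (1 - (Real.sqrt (1-‖a‖^2):ℂ)) * (inner ℂ a z : ℂ) / ((‖a‖:ℂ)^2)) • a
        - (Real.sqrt (1-‖a‖^2):ℂ) • z)

lemma inner_abs_lt_one {z w : E} (hz : ‖z‖ < 1) (hw : ‖w‖ < 1) :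
    ‖(inner ℂ w z : ℂ)‖ < 1 := by
  have h1 : ‖(inner ℂ w z : ℂ)‖ ≤ ‖w‖ * ‖z‖ := norm_inner_le_norm (𝕜 := ℂ) w z
  have : ‖w‖ * ‖z‖ < 1 := by nlinarith [norm_nonneg z, norm_nonneg w]
  calc ‖(inner ℂ w z : ℂ)‖ = ‖(inner ℂ w z : ℂ)‖ := rfl
  _ < 1 := lt_of_le_of_lt h1 this

lemma one_sub_inner_ne {z w : E} (hz : ‖z‖ < 1) (hw : ‖w‖ < 1) :
    (1:ℂ) - (inner ℂ w z : ℂ) ≠ 0 := by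
  intro h
  have h1 : (inner ℂ w z : ℂ) = 1 := by linear_combination -h
  have := inner_abs_lt_one hz hw
  rw [h1] at this
  simp at this

lemma abs_one_sub_inner_pos {z w : E} (hz : ‖z‖ < 1) (hw : ‖w‖ < 1) :
    0 < ‖1 - (inner ℂ w z : ℂ)‖ := by
  rw [norm_pos_iff]
  exact one_sub_inner_ne hz hw

lemma mob_inner {a : E} (ha : ‖a‖ < 1) (z w : E) (hz : ‖z‖ < 1) (hw : ‖w‖ < 1) :
    (1:ℂ) - (inner ℂ (mob a z) (mob a w) : ℂ)
      = (1 - (‖a‖:ℂ)^2) * (1 - inner ℂ z w)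
        / ((1 - (starRingEnd ℂ) (inner ℂ a z)) * (1 - (inner ℂ a w : ℂ))) := by
  by_cases ha0 : a = 0
  · subst ha0
    simp [mob, inner_neg_neg]
  have hA : ((‖a‖:ℂ))^2 ≠ 0 := by simp [ha0]
  have hs2 : ((Real.sqrt (1-‖a‖^2):ℂ))^2 = 1 - (‖a‖:ℂ)^2 := by
    rw [← Complex.ofReal_pow, Real.sq_sqrt (by nlinarith [norm_nonneg a])]
    push_cast; ring
  have hx : (1:ℂ) - (inner ℂ a z : ℂ) ≠ 0 := one_sub_inner_ne hz ha
  have hy : (1:ℂ) - (inner ℂ a w : ℂ) ≠ 0 := one_sub_inner_ne hw ha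
  have haa : (inner ℂ a a : ℂ) = (‖a‖:ℂ)^2 := inner_self_eq_norm_sq_to_K a
  have hza : (inner ℂ z a : ℂ) = (starRingEnd ℂ) (inner ℂ a z) := by rw [← inner_conj_symm]
  have hwa : (inner ℂ w a : ℂ) = (starRingEnd ℂ) (inner ℂ a w) := by rw [← inner_conj_symm]
  simp only [mob, ha0, if_false, inner_smul_left, inner_smul_right, inner_sub_left,
    inner_sub_right, haa, hza, hwa, map_sub, map_mul, map_one, map_div₀, map_inv₀,
    Complex.conj_ofReal, Complex.conj_conj, map_pow]
  set x : ℂ := inner ℂ a z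
  set y : ℂ := inner ℂ a w
  set q : ℂ := inner ℂ z w
  set A : ℂ := (‖a‖:ℂ)^2
  set s : ℂ := ((Real.sqrt (1-‖a‖^2)):ℂ)
  have hx' : (1:ℂ) - (starRingEnd ℂ) x ≠ 0 := by
    intro h
    apply hx
    have := congrArg (starRingEnd ℂ) h
    simpa using this
  field_simp
  ring_nf
  rw [hs2]
  ring

lemma norm_sq_mob {a : E} (ha : ‖a‖ < 1) (z : E) (hz : ‖z‖ < 1) :
    1 - ‖mob a z‖^2
      = (1 - ‖a‖^2) * (1 - ‖z‖^2) / (‖1 - (inner ℂ a z : ℂ)‖)^2 := by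
  have key := mob_inner ha z z hz hz
  have h1 : (inner ℂ (mob a z) (mob a z) : ℂ) = ((‖mob a z‖^2 : ℝ) : ℂ) := by
    rw [inner_self_eq_norm_sq_to_K]; norm_cast
  have h2 : (inner ℂ z z : ℂ) = ((‖z‖^2 : ℝ) : ℂ) := by
    rw [inner_self_eq_norm_sq_to_K]; norm_cast
  have h3 : ((1:ℂ) - (starRingEnd ℂ) (inner ℂ a z)) * (1 - (inner ℂ a z : ℂ))
      = (((‖1 - (inner ℂ a z : ℂ)‖)^2 : ℝ) : ℂ) := by
    have : ((1:ℂ) - (starRingEnd ℂ) (inner ℂ a z)) = (starRingEnd ℂ) (1 - (inner ℂ a z : ℂ)) := by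
      rw [map_sub, map_one]
    rw [this, Complex.conj_mul']
    simp
  rw [h1, h2, h3] at key
  have habs : (0:ℝ) < (‖1 - (inner ℂ a z : ℂ)‖)^2 := by
    have := abs_one_sub_inner_pos hz ha
    positivity
  have := key
  rw [show ((1:ℂ) - (‖a‖:ℂ)^2) = (((1 - ‖a‖^2 : ℝ)):ℂ) by push_cast; ring] at this
  rw [show ((1:ℂ) - ((‖z‖^2:ℝ):ℂ)) = (((1 - ‖z‖^2 : ℝ)):ℂ) by push_cast; ring] at this
  rw [show ((1:ℂ) - ((‖mob a z‖^2:ℝ):ℂ)) = (((1 - ‖mob a z‖^2 : ℝ)):ℂ) by push_cast; ring] at this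
  rw [← Complex.ofReal_mul, ← Complex.ofReal_div] at this
  exact_mod_cast this

lemma norm_mob_lt {a : E} (ha : ‖a‖ < 1) (z : E) (hz : ‖z‖ < 1) : ‖mob a z‖ < 1 := by
  have h := norm_sq_mob ha z hz
  have habs : (0:ℝ) < (‖1 - (inner ℂ a z : ℂ)‖)^2 := by
    have := abs_one_sub_inner_pos hz ha
    positivity
  have hpos : 0 < (1 - ‖a‖^2) * (1 - ‖z‖^2) / (‖1 - (inner ℂ a z : ℂ)‖)^2 := by
    apply div_pos _ habs
    exact mul_pos (by nlinarith [norm_nonneg a]) (by nlinarith [norm_nonneg z])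
  nlinarith [norm_nonneg (mob a z)]

lemma mob_zero {a : E} : mob a 0 = a := by
  by_cases ha0 : a = 0
  · subst ha0; simp [mob]
  · simp [mob, ha0]

lemma mob_self {a : E} (ha : ‖a‖ < 1) : mob a a = 0 := by
  by_cases ha0 : a = 0
  · subst ha0; simp [mob]
  have hA : ((‖a‖:ℂ))^2 ≠ 0 := by simp [ha0]
  have haa : (inner ℂ a a : ℂ) = (‖a‖:ℂ)^2 := inner_self_eq_norm_sq_to_K a
  have hA' : (‖a‖:ℂ) ≠ 0 := by simp [ha0]
  simp only [mob, ha0, if_false, haa]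
  rw [smul_eq_zero]
  right
  rw [sub_eq_zero]
  congr 1
  field_simp
  ring

lemma mob_mob {a : E} (ha : ‖a‖ < 1) (z : E) (hz : ‖z‖ < 1) : mob a (mob a z) = z := by
  by_cases ha0 : a = 0
  · subst ha0; simp [mob]
  have hA : ((‖a‖:ℂ))^2 ≠ 0 := by simp [ha0]
  have hs2 : ((Real.sqrt (1-‖a‖^2):ℂ))^2 = 1 - (‖a‖:ℂ)^2 := by
    rw [← Complex.ofReal_pow, Real.sq_sqrt (by nlinarith [norm_nonneg a])]
    push_cast; ring
  have hx : (1:ℂ) - (inner ℂ a z : ℂ) ≠ 0 := one_sub_inner_ne hz ha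
  have haa : (inner ℂ a a : ℂ) = (‖a‖:ℂ)^2 := inner_self_eq_norm_sq_to_K a
  have h1A : (1:ℂ) - (‖a‖:ℂ)^2 ≠ 0 := by
    rw [← hs2]
    intro h
    have h2 : Real.sqrt (1-‖a‖^2) = 0 := by exact_mod_cast pow_eq_zero_iff (n := 2) (by norm_num) |>.1 h
    have : (0:ℝ) < 1 - ‖a‖^2 := by nlinarith [norm_nonneg a]
    nlinarith [Real.sq_sqrt this.le, Real.sqrt_nonneg (1-‖a‖^2)]
  -- inner ℂ a (mob a z)
  have hiu : (inner ℂ a (mob a z) : ℂ)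
      = ((‖a‖:ℂ)^2 - inner ℂ a z) / (1 - inner ℂ a z) := by
    have hA' : (‖a‖:ℂ) ≠ 0 := by simp [ha0]
    simp only [mob, ha0, if_false, inner_smul_right, inner_sub_right, haa]
    field_simp
    ring
  have hXne : (1:ℂ) - (inner ℂ a (mob a z) : ℂ) ≠ 0 :=
    one_sub_inner_ne (norm_mob_lt ha z hz) ha
  simp only [mob, ha0, if_false]
  rw [show (inner ℂ a (((1 - (inner ℂ a z : ℂ))⁻¹) •
      ((1 - (1 - (Real.sqrt (1-‖a‖^2):ℂ)) * (inner ℂ a z : ℂ) / ((‖a‖:ℂ)^2)) • a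
        - (Real.sqrt (1-‖a‖^2):ℂ) • z)) : ℂ) = ((‖a‖:ℂ)^2 - inner ℂ a z) / (1 - inner ℂ a z) from by
    have := hiu; simpa [mob, ha0] using this]
  set x : ℂ := inner ℂ a z
  set A : ℂ := (‖a‖:ℂ)^2
  set s : ℂ := ((Real.sqrt (1-‖a‖^2)):ℂ)
  match_scalars
  · field_simp
    ring_nf
    rw [hs2]
    ring
  · field_simp
    ring_nf
    rw [hs2]
    ring
    field_simp
    ring

lemma pseudoHyp_nonneg (z w : E) : 0 ≤ pseudoHyp z w := Real.sqrt_nonneg _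

lemma pseudoHyp_comm (z w : E) : pseudoHyp z w = pseudoHyp w z := by
  unfold pseudoHyp
  have habs : ‖1 - (inner ℂ z w : ℂ)‖ = ‖1 - (inner ℂ w z : ℂ)‖ := by
    rw [show (1:ℂ) - (inner ℂ z w : ℂ) = (starRingEnd ℂ) (1 - (inner ℂ w z : ℂ)) by
      rw [map_sub, map_one, inner_conj_symm], Complex.norm_conj]
  rw [habs]
  ring_nf

lemma pseudoHyp_zero_right (z : E) : pseudoHyp z 0 = ‖z‖ := by
  unfold pseudoHyp
  simp only [inner_zero_left, norm_zero]
  rw [show (1:ℂ) - 0 = 1 by ring]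
  simp only [norm_one, one_pow, div_one]
  rw [show 1 - (1 - ‖z‖^2) * (1 - 0^2) = ‖z‖^2 by ring]
  exact Real.sqrt_sq (norm_nonneg z)

lemma denom_sq_lower {z w : E} (hz : ‖z‖ < 1) (hw : ‖w‖ < 1) :
    (1 - ‖z‖^2) * (1 - ‖w‖^2) ≤ (‖1 - (inner ℂ w z : ℂ)‖)^2 := by
  have h1 : ‖(1:ℂ)‖ - ‖(inner ℂ w z : ℂ)‖ ≤ ‖1 - (inner ℂ w z : ℂ)‖ :=
    norm_sub_norm_le _ _
  simp only [norm_one] at h1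
  have h2 : ‖(inner ℂ w z : ℂ)‖ ≤ ‖w‖ * ‖z‖ := norm_inner_le_norm (𝕜 := ℂ) w z
  have h3 : 1 - ‖w‖ * ‖z‖ ≤ ‖1 - (inner ℂ w z : ℂ)‖ := by linarith
  have h0 : 0 ≤ 1 - ‖w‖*‖z‖ := by nlinarith [norm_nonneg z, norm_nonneg w]
  nlinarith [norm_nonneg z, norm_nonneg w, sq_nonneg (‖z‖ - ‖w‖)]

lemma pseudoHyp_arg_nonneg {z w : E} (hz : ‖z‖ < 1) (hw : ‖w‖ < 1) :
    0 ≤ 1 - (1 - ‖z‖ ^ 2) * (1 - ‖w‖ ^ 2) / (‖1 - (inner ℂ w z : ℂ)‖) ^ 2 := by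
  have hd := abs_one_sub_inner_pos hz hw
  have := denom_sq_lower hz hw
  rw [sub_nonneg, div_le_one (by positivity)]
  exact this

lemma pseudoHyp_lt_one {z w : E} (hz : ‖z‖ < 1) (hw : ‖w‖ < 1) : pseudoHyp z w < 1 := by
  have hd := abs_one_sub_inner_pos hz hw
  have harg : 1 - (1 - ‖z‖ ^ 2) * (1 - ‖w‖ ^ 2) / (‖1 - (inner ℂ w z : ℂ)‖) ^ 2 < 1 := by
    have hM : 0 < (1 - ‖z‖ ^ 2) * (1 - ‖w‖ ^ 2) / (‖1 - (inner ℂ w z : ℂ)‖) ^ 2 := by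
      apply div_pos _ (by positivity)
      exact mul_pos (by nlinarith [norm_nonneg z]) (by nlinarith [norm_nonneg w])
    linarith
  unfold pseudoHyp
  calc Real.sqrt _ < Real.sqrt 1 := Real.sqrt_lt_sqrt (pseudoHyp_arg_nonneg hz hw) harg
  _ = 1 := Real.sqrt_one

lemma pseudoHyp_self {z : E} (hz : ‖z‖ < 1) : pseudoHyp z z = 0 := by
  unfold pseudoHyp
  have h1 : (inner ℂ z z : ℂ) = ((‖z‖^2 : ℝ) : ℂ) := by
    rw [inner_self_eq_norm_sq_to_K]; norm_cast
  rw [h1]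
  rw [show (1:ℂ) - ((‖z‖^2:ℝ):ℂ) = (((1 - ‖z‖^2 : ℝ)):ℂ) by push_cast; ring]
  rw [Complex.norm_real, Real.norm_eq_abs, abs_of_pos (by nlinarith [norm_nonneg z])]
  rw [show (1 - ‖z‖ ^ 2) * (1 - ‖z‖ ^ 2) / (1 - ‖z‖^2)^2 = 1 by
    field_simp [show (1:ℝ) - ‖z‖^2 ≠ 0 by nlinarith [norm_nonneg z]]]
  simp

lemma pseudoHyp_mob {a : E} (ha : ‖a‖ < 1) (z w : E) (hz : ‖z‖ < 1) (hw : ‖w‖ < 1) :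
    pseudoHyp (mob a z) (mob a w) = pseudoHyp z w := by
  have habs : ‖1 - (inner ℂ (mob a w) (mob a z) : ℂ)‖
      = (1-‖a‖^2) * ‖1 - (inner ℂ w z : ℂ)‖
        / (‖1 - (inner ℂ a w : ℂ)‖ * ‖1 - (inner ℂ a z : ℂ)‖) := by
    rw [mob_inner ha w z hw hz]
    rw [norm_div, norm_mul, norm_mul]
    congr 2
    · rw [show (1:ℂ) - (‖a‖:ℂ)^2 = (((1 - ‖a‖^2 : ℝ)):ℂ) by push_cast; ring,
        Complex.norm_real, Real.norm_eq_abs, abs_of_pos (by nlinarith [norm_nonneg a])]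
    · rw [show (1:ℂ) - (starRingEnd ℂ) (inner ℂ a w : ℂ) = (starRingEnd ℂ) (1 - (inner ℂ a w : ℂ)) by
        rw [map_sub, map_one], Complex.norm_conj]
  unfold pseudoHyp
  congr 1
  rw [norm_sq_mob ha z hz, norm_sq_mob ha w hw, habs]
  have d1 : (0:ℝ) < ‖1 - (inner ℂ a z : ℂ)‖ := abs_one_sub_inner_pos hz ha
  have d2 : (0:ℝ) < ‖1 - (inner ℂ a w : ℂ)‖ := abs_one_sub_inner_pos hw ha
  have d3 : (0:ℝ) < ‖1 - (inner ℂ w z : ℂ)‖ := abs_one_sub_inner_pos hz hw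
  have d4 : (0:ℝ) < 1 - ‖a‖^2 := by nlinarith [norm_nonneg a]
  congr 1
  set na := ‖a‖
  set nz := ‖z‖
  set nw := ‖w‖
  set Dz := ‖1 - (inner ℂ a z : ℂ)‖
  set Dw := ‖1 - (inner ℂ a w : ℂ)‖
  set Dzw := ‖1 - (inner ℂ w z : ℂ)‖
  field_simp

lemma norm_mob_eq {a : E} (ha : ‖a‖ < 1) (z : E) (hz : ‖z‖ < 1) :
    ‖mob a z‖ = pseudoHyp z a := by
  have h := pseudoHyp_mob ha z a hz ha
  rw [mob_self ha, pseudoHyp_zero_right] at h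
  exact h

lemma pseudoHyp_le_center {z w : E} (hz : ‖z‖ < 1) (hw : ‖w‖ < 1) :
    pseudoHyp z w ≤ (‖z‖ + ‖w‖) / (1 + ‖z‖ * ‖w‖) := by
  set n := ‖z‖
  set m := ‖w‖
  have hn : 0 ≤ n := norm_nonneg z
  have hm : 0 ≤ m := norm_nonneg w
  have hd : (0:ℝ) < 1 + n*m := by nlinarith
  have habs : ‖1 - (inner ℂ w z : ℂ)‖ ≤ 1 + n*m := by
    have h1 : ‖1 - (inner ℂ w z : ℂ)‖ ≤ ‖(1:ℂ)‖ + ‖(inner ℂ w z : ℂ)‖ := by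
      simpa using (norm_sub_le (1:ℂ) (inner ℂ w z : ℂ) : _)
    have h2 : ‖(inner ℂ w z : ℂ)‖ ≤ m * n := norm_inner_le_norm (𝕜 := ℂ) w z
    simp only [norm_one] at h1
    nlinarith
  have hD : (0:ℝ) < ‖1 - (inner ℂ w z : ℂ)‖ := abs_one_sub_inner_pos hz hw
  have key : 1 - (1 - n^2) * (1 - m^2) / (‖1 - (inner ℂ w z : ℂ)‖)^2
      ≤ ((n+m)/(1+n*m))^2 := by
    have e : ((n+m)/(1+n*m))^2 = 1 - (1 - n^2)*(1 - m^2)/(1+n*m)^2 := by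
      field_simp
      ring
    have hmono : (1 - n^2)*(1 - m^2)/(1+n*m)^2 ≤ (1 - n^2)*(1 - m^2)/(‖1 - (inner ℂ w z : ℂ)‖)^2 := by
      apply div_le_div_of_nonneg_left _ (by positivity) _
      · exact le_of_lt (mul_pos (by nlinarith) (by nlinarith))
      · nlinarith [habs, hD]
    linarith
  calc pseudoHyp z w ≤ Real.sqrt (((n+m)/(1+n*m))^2) := Real.sqrt_le_sqrt key
  _ = (n+m)/(1+n*m) := Real.sqrt_sq (by positivity)

lemma pseudoHyp_segment (u : E) (hu : ‖u‖ < 1) {s t : ℝ} (hs : 0 ≤ s) (hst : s ≤ t)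
    (ht1 : t ≤ 1) :
    pseudoHyp ((s:ℂ) • u) ((t:ℂ) • u) = (t - s) * ‖u‖ / (1 - s * t * ‖u‖^2) := by
  set r := ‖u‖ with hr
  have hr0 : 0 ≤ r := norm_nonneg u
  have hst1 : s * t * r^2 < 1 := by
    have h1 : s * t ≤ 1 := by nlinarith
    have h2 : r^2 < 1 := by nlinarith
    nlinarith [mul_nonneg hs (hs.trans hst)]
  have hns : ‖(s:ℂ) • u‖ = s * r := by
    rw [norm_smul, Complex.norm_real, Real.norm_eq_abs, _root_.abs_of_nonneg hs]
  have hnt : ‖(t:ℂ) • u‖ = t * r := by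
    rw [norm_smul, Complex.norm_real, Real.norm_eq_abs, _root_.abs_of_nonneg (le_trans hs hst)]
  have hinner : (inner ℂ ((t:ℂ) • u) ((s:ℂ) • u) : ℂ) = ((s*t*r^2 : ℝ) : ℂ) := by
    have huu : (inner ℂ u u : ℂ) = ((‖u‖^2:ℝ):ℂ) := by
      rw [inner_self_eq_norm_sq_to_K]; norm_cast
    rw [inner_smul_left, inner_smul_right, huu, Complex.conj_ofReal, ← hr]
    push_cast
    ring
  unfold pseudoHyp
  rw [hns, hnt, hinner]
  rw [show (1:ℂ) - ((s*t*r^2:ℝ):ℂ) = (((1 - s*t*r^2 : ℝ)):ℂ) by push_cast; ring]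
  rw [Complex.norm_real, Real.norm_eq_abs, abs_of_pos (by linarith)]
  have hDne : (1 - s*t*r^2) ≠ 0 := ne_of_gt (by linarith)
  have harg : 1 - (1 - (s*r)^2) * (1 - (t*r)^2) / (1 - s*t*r^2)^2
      = ((t-s)*r/(1 - s*t*r^2))^2 := by
    have hDne' : 1 - s*r^2*t ≠ 0 := by rw [show s*r^2*t = s*t*r^2 by ring]; exact hDne
    field_simp
    ring
  rw [harg, Real.sqrt_sq]
  apply div_nonneg _ (by linarith)
  exact mul_nonneg (by linarith) hr0

lemma mob_continuousOn {a : E} (ha : ‖a‖ < 1) :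
    ContinuousOn (mob a) (Metric.ball (0:E) 1) := by
  by_cases ha0 : a = 0
  · subst ha0
    have heq0 : mob (0:E) = fun z : E => -z := by funext z; simp [mob]
    rw [heq0]
    exact continuous_neg.continuousOn
  have hinner : Continuous fun z : E => (inner ℂ a z : ℂ) := by
    exact Continuous.inner continuous_const continuous_id
  have hne : ∀ z ∈ Metric.ball (0:E) 1, (1:ℂ) - (inner ℂ a z : ℂ) ≠ 0 := by
    intro z hzb
    rw [Metric.mem_ball, dist_zero_right] at hzb
    exact one_sub_inner_ne hzb ha
  have h1 : ContinuousOn (fun z : E => ((1:ℂ) - (inner ℂ a z : ℂ))⁻¹) (Metric.ball (0:E) 1) :=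
    ((continuous_const.sub hinner).continuousOn).inv₀ hne
  have h2 : Continuous (fun z : E =>
      ((1 - (1 - (Real.sqrt (1-‖a‖^2):ℂ)) * (inner ℂ a z : ℂ) / ((‖a‖:ℂ)^2)) • a
        - (Real.sqrt (1-‖a‖^2):ℂ) • z)) := by
    apply Continuous.sub
    · exact ((continuous_const.sub ((continuous_const.mul hinner).div_const _)).smul continuous_const)
    · fun_prop
  have : ContinuousOn (fun z : E => ((1:ℂ) - (inner ℂ a z : ℂ))⁻¹ •
      ((1 - (1 - (Real.sqrt (1-‖a‖^2):ℂ)) * (inner ℂ a z : ℂ) / ((‖a‖:ℂ)^2)) • a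
        - (Real.sqrt (1-‖a‖^2):ℂ) • z)) (Metric.ball (0:E) 1) :=
    h1.smul h2.continuousOn
  have heq : ∀ z : E, mob a z = ((1:ℂ) - (inner ℂ a z : ℂ))⁻¹ •
      ((1 - (1 - (Real.sqrt (1-‖a‖^2):ℂ)) * (inner ℂ a z : ℂ) / ((‖a‖:ℂ)^2)) • a
        - (Real.sqrt (1-‖a‖^2):ℂ) • z) := by
    intro z; simp [mob, ha0]
  exact this.congr (fun z _ => (heq z))

lemma pseudoHyp_continuousOn :
    ContinuousOn (fun p : E × E => pseudoHyp p.1 p.2)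
      (Metric.ball (0:E) 1 ×ˢ Metric.ball (0:E) 1) := by
  apply ContinuousOn.sqrt
  apply ContinuousOn.sub continuousOn_const
  apply ContinuousOn.div
  · apply ContinuousOn.mul
    · exact (continuous_const.sub ((continuous_norm.comp continuous_fst).pow 2)).continuousOn
    · exact (continuous_const.sub ((continuous_norm.comp continuous_snd).pow 2)).continuousOn
  · apply ContinuousOn.pow
    apply Continuous.comp_continuousOn continuous_norm
    exact (continuous_const.sub (Continuous.inner continuous_snd continuous_fst)).continuousOn
  · intro p hp
    simp only [Set.mem_prod, Metric.mem_ball, dist_zero_right] at hp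
    have := abs_one_sub_inner_pos hp.1 hp.2
    positivity

lemma beta_triangle {z v w : E} (hz : ‖z‖ < 1) (hv : ‖v‖ < 1) (hw : ‖w‖ < 1) :
    atanh (pseudoHyp z w) ≤ atanh (pseudoHyp z v) + atanh (pseudoHyp v w) := by
  set nZ := ‖mob v z‖ with hnZ
  set nW := ‖mob v w‖ with hnW
  have hZ : nZ < 1 := norm_mob_lt hv z hz
  have hW : nW < 1 := norm_mob_lt hv w hw
  have hZ0 : 0 ≤ nZ := norm_nonneg _
  have hW0 : 0 ≤ nW := norm_nonneg _
  have h1 : pseudoHyp z w = pseudoHyp (mob v z) (mob v w) := (pseudoHyp_mob hv z w hz hw).symm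
  have h2 : pseudoHyp (mob v z) (mob v w) ≤ (nZ + nW)/(1 + nZ*nW) := pseudoHyp_le_center hZ hW
  have hc1 : (nZ + nW)/(1 + nZ*nW) < 1 := by
    rw [div_lt_one (by nlinarith)]; nlinarith
  have h3 : atanh (pseudoHyp z w) ≤ atanh ((nZ + nW)/(1 + nZ*nW)) := by
    apply atanh_mono _ _ hc1
    · have := pseudoHyp_nonneg z w; linarith
    · rw [h1]; exact h2
  have h4 : atanh nZ + atanh nW = atanh ((nZ + nW)/(1 + nZ*nW)) := atanh_add hZ0 hZ hW0 hW
  have h5 : nZ = pseudoHyp z v := norm_mob_eq hv z hz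
  have h6 : nW = pseudoHyp v w := by
    rw [hnW, norm_mob_eq hv w hw]; exact pseudoHyp_comm w v
  rw [← h5, ← h6]
  linarith

lemma beta_chain (γ : ℝ → E) (t : ℕ → ℝ) (n : ℕ)
    (hball : ∀ i, i ≤ n → ‖γ (t i)‖ < 1) :
    atanh (pseudoHyp (γ (t 0)) (γ (t n)))
      ≤ ∑ i ∈ Finset.range n, atanh (pseudoHyp (γ (t i)) (γ (t (i+1)))) := by
  induction n with
  | zero =>
    rw [pseudoHyp_self (hball 0 (le_refl 0)), atanh_zero]
    simp
  | succ n ih =>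
    have h1 : atanh (pseudoHyp (γ (t 0)) (γ (t (n+1))))
        ≤ atanh (pseudoHyp (γ (t 0)) (γ (t n))) + atanh (pseudoHyp (γ (t n)) (γ (t (n+1)))) :=
      beta_triangle (hball 0 (by omega)) (hball n (by omega)) (hball (n+1) (le_refl _))
    have h2 := ih (fun i hi => hball i (by omega))
    rw [Finset.sum_range_succ]
    linarith


lemma partition_mono {t : ℕ → ℝ} {n : ℕ} (hmono : ∀ i, i < n → t i < t (i + 1)) :
    ∀ j, j ≤ n → ∀ i, i ≤ j → t i ≤ t j := by
  intro j
  induction j with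
  | zero => intro _ i hi; rw [Nat.le_zero] at hi; rw [hi]
  | succ j ih =>
    intro hj i hi
    by_cases h : i ≤ j
    · exact (ih (by omega) i (by omega)).trans (hmono j (by omega)).le
    · have : i = j + 1 := by omega
      rw [this]

lemma geodesic_len {z w : E} (hz : ‖z‖ < 1) (hw : ‖w‖ < 1) :
    curveLen pseudoHyp 0 1 (fun s : ℝ => mob z ((s:ℂ) • mob z w))
      ≤ ENNReal.ofReal (atanh (pseudoHyp z w)) := by
  set u := mob z w with hu
  set r := ‖u‖ with hr
  have hr1 : r < 1 := norm_mob_lt hz w hw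
  have hr0 : 0 ≤ r := norm_nonneg u
  apply sSup_le
  rintro L ⟨n, t, ht0, htn, hmono, rfl⟩
  have hbd : ∀ i, i ≤ n → 0 ≤ t i ∧ t i ≤ 1 := by
    intro i hi
    constructor
    · rw [← ht0]; exact partition_mono hmono i hi 0 (by omega)
    · rw [← htn]; exact partition_mono hmono n (le_refl n) i hi
  have hnorm : ∀ i, i ≤ n → ‖((t i : ℝ) : ℂ) • u‖ < 1 := by
    intro i hi
    rw [norm_smul, Complex.norm_real, Real.norm_eq_abs,
      _root_.abs_of_nonneg (hbd i hi).1]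
    nlinarith [(hbd i hi).1, (hbd i hi).2]
  have hpt : ∀ i, i < n → pseudoHyp (mob z (((t i : ℝ):ℂ) • u)) (mob z (((t (i+1) : ℝ):ℂ) • u))
      ≤ atanh (t (i+1) * r) - atanh (t i * r) := by
    intro i hi
    have h1 : pseudoHyp (mob z (((t i : ℝ):ℂ) • u)) (mob z (((t (i+1) : ℝ):ℂ) • u))
        = pseudoHyp (((t i : ℝ):ℂ) • u) (((t (i+1) : ℝ):ℂ) • u) :=
      pseudoHyp_mob hz _ _ (hnorm i (by omega)) (hnorm (i+1) (by omega))
    have h2 := pseudoHyp_segment u hr1 (hbd i (by omega)).1 (hmono i hi).le (hbd (i+1) (by omega)).2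
    set a' := t i * r with ha'
    set b' := t (i+1) * r with hb'
    have ha0 : 0 ≤ a' := mul_nonneg (hbd i (by omega)).1 hr0
    have hab : a' ≤ b' := mul_le_mul_of_nonneg_right (hmono i hi).le hr0
    have hb1 : b' < 1 := by
      have := (hbd (i+1) (by omega)).2
      have := (hbd (i+1) (by omega)).1
      nlinarith
    have hsub := atanh_sub ha0 hab hb1
    have hc0 : 0 ≤ (b' - a')/(1 - a'*b') := div_nonneg (by linarith) (by nlinarith)
    have hc1 : (b' - a')/(1 - a'*b') < 1 := by
      rw [div_lt_one (by nlinarith)]; nlinarith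
    have hle := le_atanh hc0 hc1
    have heq : (t (i+1) - t i) * r / (1 - t i * t (i+1) * r^2) = (b' - a')/(1 - a'*b') := by
      rw [ha', hb']
      congr 1
      · ring
      · ring
    rw [h1, h2, heq, hsub]
    exact hle
  calc (∑ i ∈ Finset.range n, ENNReal.ofReal
        (pseudoHyp (mob z (((t i:ℝ):ℂ) • u)) (mob z (((t (i+1):ℝ):ℂ) • u))))
      = ENNReal.ofReal (∑ i ∈ Finset.range n,
        (pseudoHyp (mob z (((t i:ℝ):ℂ) • u)) (mob z (((t (i+1):ℝ):ℂ) • u)))) := by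
        rw [ENNReal.ofReal_sum_of_nonneg]
        intro i _
        exact pseudoHyp_nonneg _ _
  _ ≤ ENNReal.ofReal (∑ i ∈ Finset.range n, (atanh (t (i+1) * r) - atanh (t i * r))) := by
        apply ENNReal.ofReal_le_ofReal
        apply Finset.sum_le_sum
        intro i hi
        exact hpt i (Finset.mem_range.mp hi)
  _ = ENNReal.ofReal (atanh (t n * r) - atanh (t 0 * r)) := by
        rw [Finset.sum_range_sub (f := fun i => atanh (t i * r))]
  _ = ENNReal.ofReal (atanh (pseudoHyp z w)) := by
        rw [ht0, htn, one_mul, zero_mul, atanh_zero, sub_zero]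
        congr 1
        rw [hr, hu, norm_mob_eq hz w hw]
        exact congrArg atanh (pseudoHyp_comm w z)

lemma length_lower {z w : E} (hz : ‖z‖ < 1) (hw : ‖w‖ < 1) {a b : ℝ} {γ : ℝ → E}
    (hab : a ≤ b) (hcont : ContinuousOn γ (Set.Icc a b))
    (hball : ∀ t ∈ Set.Icc a b, ‖γ t‖ < 1) (hga : γ a = z) (hgb : γ b = w) :
    ENNReal.ofReal (atanh (pseudoHyp z w)) ≤ curveLen pseudoHyp a b γ := by
  by_cases htop : curveLen pseudoHyp a b γ = ⊤
  · rw [htop]; exact le_top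
  rcases eq_or_lt_of_le hab with heq | hlt
  · subst heq
    have : z = w := by rw [← hga, ← hgb]
    subst this
    rw [pseudoHyp_self hz, atanh_zero]
    simp
  set Λ := (curveLen pseudoHyp a b γ).toReal with hΛ
  have hΛ0 : 0 ≤ Λ := ENNReal.toReal_nonneg
  have Csum : ∀ (n : ℕ) (t : ℕ → ℝ), t 0 = a → t n = b → (∀ i, i < n → t i < t (i+1)) →
      ∑ i ∈ Finset.range n, pseudoHyp (γ (t i)) (γ (t (i+1))) ≤ Λ := by
    intro n t ht0 htn hmono
    have hmem : (∑ i ∈ Finset.range n, ENNReal.ofReal (pseudoHyp (γ (t i)) (γ (t (i+1)))))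
        ∈ {L : ENNReal | ∃ (n : ℕ) (t : ℕ → ℝ), t 0 = a ∧ t n = b ∧
            (∀ i, i < n → t i < t (i + 1)) ∧
            L = ∑ i ∈ Finset.range n, ENNReal.ofReal (pseudoHyp (γ (t i)) (γ (t (i + 1))))} :=
      ⟨n, t, ht0, htn, hmono, rfl⟩
    have hle : (∑ i ∈ Finset.range n, ENNReal.ofReal (pseudoHyp (γ (t i)) (γ (t (i+1)))))
        ≤ curveLen pseudoHyp a b γ := le_sSup hmem
    rw [← ENNReal.ofReal_sum_of_nonneg (fun i _ => pseudoHyp_nonneg _ _)] at hle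
    exact (ENNReal.ofReal_le_iff_le_toReal htop).mp hle
  have Cfine : ∀ δ : ℝ, 0 < δ → ∃ (n : ℕ) (t : ℕ → ℝ), t 0 = a ∧ t n = b ∧
      (∀ i, i < n → t i < t (i+1)) ∧ (∀ i, i ≤ n → t i ∈ Set.Icc a b) ∧
      (∀ i, i < n → pseudoHyp (γ (t i)) (γ (t (i+1))) ≤ δ) := by
    intro δ hδ
    have hK : IsCompact (Set.Icc a b ×ˢ Set.Icc a b) := isCompact_Icc.prod isCompact_Icc
    have hg : ContinuousOn (fun p : ℝ × ℝ => (γ p.1, γ p.2)) (Set.Icc a b ×ˢ Set.Icc a b) := by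
      apply ContinuousOn.prodMk
      · exact hcont.comp continuousOn_fst (fun p hp => hp.1)
      · exact hcont.comp continuousOn_snd (fun p hp => hp.2)
    have hmaps : Set.MapsTo (fun p : ℝ × ℝ => (γ p.1, γ p.2)) (Set.Icc a b ×ˢ Set.Icc a b)
        (Metric.ball (0:E) 1 ×ˢ Metric.ball (0:E) 1) := by
      intro p hp
      constructor
      · rw [Metric.mem_ball, dist_zero_right]; exact hball _ hp.1
      · rw [Metric.mem_ball, dist_zero_right]; exact hball _ hp.2
    have hFcont : ContinuousOn (fun p : ℝ × ℝ => pseudoHyp (γ p.1) (γ p.2))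
        (Set.Icc a b ×ˢ Set.Icc a b) := by
      have := ContinuousOn.comp (pseudoHyp_continuousOn (d := d)) hg hmaps
      exact this
    have hUC := hK.uniformContinuousOn_of_continuous hFcont
    rw [Metric.uniformContinuousOn_iff] at hUC
    obtain ⟨η, hη, hUCη⟩ := hUC δ hδ
    obtain ⟨m, hm⟩ := exists_nat_gt ((b-a)/η)
    set n := m + 1 with hn
    have hn0 : (0:ℝ) < (n:ℝ) := by positivity
    set dd := (b-a)/(n:ℝ) with hdd
    have hd0 : 0 < dd := div_pos (by linarith) hn0
    have hdη : dd < η := by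
      rw [hdd, div_lt_iff₀ hn0]
      have h1 : (b-a)/η < (n:ℝ) := by
        calc (b-a)/η < (m:ℝ) := hm
        _ ≤ (n:ℝ) := by exact_mod_cast Nat.le_succ m
      rw [div_lt_iff₀ hη] at h1
      linarith [h1]
    have hne : (n:ℝ) ≠ 0 := ne_of_gt hn0
    have hndd : (n:ℝ) * dd = b - a := by rw [hdd]; field_simp
    refine ⟨n, fun i => a + i * dd, by simp, ?_, ?_, ?_, ?_⟩
    · simp only
      linarith [hndd]
    · intro i _
      have : (i:ℝ) < (i:ℝ) + 1 := by linarith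
      push_cast
      nlinarith
    · intro i hi
      simp only
      constructor
      · have : (0:ℝ) ≤ i * dd := mul_nonneg (Nat.cast_nonneg i) hd0.le
        linarith
      · have h1 : (i:ℝ) * dd ≤ (n:ℝ) * dd := by
          apply mul_le_mul_of_nonneg_right _ hd0.le
          exact_mod_cast hi
        linarith [hndd]
    · intro i hi
      have hti : a + i * dd ∈ Set.Icc a b := by
        constructor
        · have : (0:ℝ) ≤ i * dd := mul_nonneg (Nat.cast_nonneg i) hd0.le
          linarith
        · have h1 : (i:ℝ) * dd ≤ (n:ℝ) * dd := by
            apply mul_le_mul_of_nonneg_right _ hd0.le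
            exact_mod_cast (le_of_lt hi)
          linarith [hndd]
      have hti1 : a + (i+1 : ℕ) * dd ∈ Set.Icc a b := by
        constructor
        · have : (0:ℝ) ≤ ((i+1:ℕ):ℝ) * dd := mul_nonneg (Nat.cast_nonneg _) hd0.le
          linarith
        · have h1 : ((i+1:ℕ):ℝ) * dd ≤ (n:ℝ) * dd := by
            apply mul_le_mul_of_nonneg_right _ hd0.le
            exact_mod_cast hi
          linarith [hndd]
      have hp : (a + i * dd, a + (i+1:ℕ) * dd) ∈ Set.Icc a b ×ˢ Set.Icc a b := ⟨hti, hti1⟩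
      have hq : (a + i * dd, a + i * dd) ∈ Set.Icc a b ×ˢ Set.Icc a b := ⟨hti, hti⟩
      have hdist : dist ((a + i * dd, a + (i+1:ℕ) * dd) : ℝ × ℝ) ((a + i * dd, a + i * dd) : ℝ × ℝ) < η := by
        rw [Prod.dist_eq]
        simp only [dist_self]
        rw [Real.dist_eq]
        have : |a + (i+1:ℕ) * dd - (a + i * dd)| = dd := by
          rw [abs_of_pos]
          · push_cast; ring
          · push_cast; nlinarith
        rw [max_eq_right]
        · rw [this]; exact hdη
        · rw [this]; exact hd0.le
      have := hUCη _ hp _ hq hdist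
      simp only at this
      rw [pseudoHyp_self (hball _ hti), Real.dist_eq, sub_zero] at this
      calc pseudoHyp (γ (a + i * dd)) (γ (a + (i+1:ℕ) * dd))
          ≤ |pseudoHyp (γ (a + i * dd)) (γ (a + (i+1:ℕ) * dd))| := le_abs_self _
      _ ≤ δ := le_of_lt this
  have key : ∀ δ : ℝ, 0 < δ → δ < 1 → atanh (pseudoHyp z w) * (1 - δ) ≤ Λ := by
    intro δ hδ0 hδ1
    obtain ⟨n, t, ht0, htn, hmono, hmem, hsmall⟩ := Cfine δ hδ0
    have hballi : ∀ i, i ≤ n → ‖γ (t i)‖ < 1 := fun i hi => hball _ (hmem i hi)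
    have hchain := beta_chain γ t n hballi
    rw [ht0, htn, hga, hgb] at hchain
    have hterm : ∀ i, i < n → atanh (pseudoHyp (γ (t i)) (γ (t (i+1))))
        ≤ pseudoHyp (γ (t i)) (γ (t (i+1))) / (1 - δ) := by
      intro i hi
      set ρ := pseudoHyp (γ (t i)) (γ (t (i+1))) with hρ
      have hρ0 : 0 ≤ ρ := pseudoHyp_nonneg _ _
      have hρ1 : ρ < 1 := pseudoHyp_lt_one (hballi i (by omega)) (hballi (i+1) (by omega))
      have h1 : atanh ρ ≤ ρ/(1-ρ) := atanh_le hρ0 hρ1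
      have h2 : ρ ≤ δ := hsmall i hi
      have h3 : ρ/(1-ρ) ≤ ρ/(1-δ) := by
        apply div_le_div_of_nonneg_left hρ0 (by linarith)
        linarith
      linarith
    have hsum : ∑ i ∈ Finset.range n, atanh (pseudoHyp (γ (t i)) (γ (t (i+1))))
        ≤ (∑ i ∈ Finset.range n, pseudoHyp (γ (t i)) (γ (t (i+1)))) / (1 - δ) := by
      rw [Finset.sum_div]
      apply Finset.sum_le_sum
      intro i hi
      exact hterm i (Finset.mem_range.mp hi)
    have hΛle := Csum n t ht0 htn hmono
    have h4 : atanh (pseudoHyp z w) ≤ Λ / (1 - δ) := by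
      calc atanh (pseudoHyp z w) ≤ _ := hchain
      _ ≤ _ := hsum
      _ ≤ Λ / (1-δ) := by
          have h1δ : (0:ℝ) < 1 - δ := by linarith
          gcongr
    rw [le_div_iff₀ (by linarith)] at h4
    linarith [h4]
  have hfinal : atanh (pseudoHyp z w) ≤ Λ := by
    by_contra hcon
    push_neg at hcon
    set c := atanh (pseudoHyp z w) with hc
    have hc0 : 0 < c := lt_of_le_of_lt hΛ0 hcon
    set δ := (c - Λ)/(2*c) with hδ
    have hδ0 : 0 < δ := div_pos (by linarith) (by linarith)
    have hδ1 : δ < 1 := by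
      rw [hδ, div_lt_one (by linarith)]
      linarith
    have := key δ hδ0 hδ1
    have hcδ : c * δ = (c - Λ)/2 := by
      rw [hδ]
      field_simp
    nlinarith
  calc ENNReal.ofReal (atanh (pseudoHyp z w)) ≤ ENNReal.ofReal Λ :=
        ENNReal.ofReal_le_ofReal hfinal
  _ = curveLen pseudoHyp a b γ := ENNReal.ofReal_toReal htop

/-- For `z, w ∈ 𝔹_d`, the infimum of the pseudohyperbolic lengths of continuous curves
in `𝔹_d` joining `z` to `w` equals the Poincaré–Bergman distance
`β(z,w) = artanh(ρ(z,w)) = (1/2)·log((1+ρ(z,w))/(1−ρ(z,w)))`. -/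
theorem inner_length_eq_bergman (d : ℕ) (z w : EuclideanSpace ℂ (Fin d))
    (hz : ‖z‖ < 1) (hw : ‖w‖ < 1) :
    sInf {L : ENNReal | ∃ (a b : ℝ) (γ : ℝ → EuclideanSpace ℂ (Fin d)), a ≤ b ∧
        ContinuousOn γ (Set.Icc a b) ∧ (∀ t ∈ Set.Icc a b, ‖γ t‖ < 1) ∧
        γ a = z ∧ γ b = w ∧ L = curveLen pseudoHyp a b γ} =
      ENNReal.ofReal
        ((1 / 2) * Real.log ((1 + pseudoHyp z w) / (1 - pseudoHyp z w))) := by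
  have hR : (1 / 2 : ℝ) * Real.log ((1 + pseudoHyp z w) / (1 - pseudoHyp z w))
      = atanh (pseudoHyp z w) := rfl
  rw [hR]
  apply le_antisymm
  · set u := mob z w with hu
    have hu1 : ‖u‖ < 1 := norm_mob_lt hz w hw
    set γ : ℝ → EuclideanSpace ℂ (Fin d) := fun s : ℝ => mob z ((s:ℂ) • u) with hγ
    have hsm : ∀ s : ℝ, s ∈ Set.Icc (0:ℝ) 1 → ‖(s:ℂ) • u‖ < 1 := by
      intro s hs
      rw [norm_smul, Complex.norm_real, Real.norm_eq_abs, _root_.abs_of_nonneg hs.1]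
      nlinarith [hs.1, hs.2, norm_nonneg u]
    have hcont : ContinuousOn γ (Set.Icc (0:ℝ) 1) := by
      apply ContinuousOn.comp (mob_continuousOn hz)
      · exact (Continuous.smul Complex.continuous_ofReal continuous_const).continuousOn
      · intro s hs
        rw [Metric.mem_ball, dist_zero_right]
        exact hsm s hs
    have hballt : ∀ t ∈ Set.Icc (0:ℝ) 1, ‖γ t‖ < 1 := by
      intro t ht
      exact norm_mob_lt hz _ (hsm t ht)
    have hγ0 : γ 0 = z := by
      simp only [hγ, Complex.ofReal_zero, zero_smul]
      exact mob_zero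
    have hγ1 : γ 1 = w := by
      simp only [hγ, Complex.ofReal_one, one_smul]
      exact mob_mob hz w hw
    have hmem : curveLen pseudoHyp 0 1 γ ∈
        {L : ENNReal | ∃ (a b : ℝ) (γ : ℝ → EuclideanSpace ℂ (Fin d)), a ≤ b ∧
          ContinuousOn γ (Set.Icc a b) ∧ (∀ t ∈ Set.Icc a b, ‖γ t‖ < 1) ∧
          γ a = z ∧ γ b = w ∧ L = curveLen pseudoHyp a b γ} :=
      ⟨0, 1, γ, by norm_num, hcont, hballt, hγ0, hγ1, rfl⟩
    exact le_trans (sInf_le hmem) (geodesic_len hz hw)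
  · apply le_sInf
    rintro L ⟨a, b, γ, hab, hcont, hball, hga, hgb, rfl⟩
    exact length_lower hz hw hab hcont hball hga hgb
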